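/- Frame property: if K = ∅ (no static causal laws) and a is executable in s with consistent direct effects e(a,s), then Φ(a,s) contains exactly one state s', and s' = e(a,s) ∪ {l ∈ s : the complement of l is not in e(a,s)}. -/
import Mathlib


/-- A fluent literal over a set `F` of fluent atoms. -/
abbrev Lit (F : Type) := Bool × F

/-- The complement of a literal. -/
def complLit {F : Type} (l : Lit F) : Lit F := (!l.1, l.2)

/-- A static causal law `head if body`. -/
structure Law (F : Type) where
  head : Lit F
  body : Set (Lit F)

/-- A set of literals is consistent if it contains no complementary pair. -/
def consistentSet {F : Type} (u : Set (Lit F)) : Prop :=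
  ∀ f : F, ¬((true, f) ∈ u ∧ (false, f) ∈ u)

/-- `S` is closed under the static causal laws `K`. -/
def closedUnder {F : Type} (K : Set (Law F)) (S : Set (Lit F)) : Prop :=
  ∀ l ∈ K, l.body ⊆ S → l.head ∈ S

/-- `S = Cl_K(u)`: the least consistent superset of `u` closed under `K`. -/
def IsClosure {F : Type} (K : Set (Law F)) (u S : Set (Lit F)) : Prop :=
  u ⊆ S ∧ consistentSet S ∧ closedUnder K S ∧
    ∀ S', u ⊆ S' → consistentSet S' → closedUnder K S' → S ⊆ S'

/-- A state: a maximal consistent set of fluent literals closed under `K`. -/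
def IsState {F : Type} (K : Set (Law F)) (s : Set (Lit F)) : Prop :=
  consistentSet s ∧ closedUnder K s ∧ ∀ f : F, (true, f) ∈ s ∨ (false, f) ∈ s

lemma compl_pair {F : Type} (u : Set (Lit F)) (hu : consistentSet u)
    (l : Lit F) (h1 : l ∈ u) (h2 : complLit l ∈ u) : False := by
  obtain ⟨b, f⟩ := l
  cases b
  · exact hu f ⟨h2, h1⟩
  · exact hu f ⟨h1, h2⟩

/-- Frame property: with no static causal laws (`K = ∅`) and consistent direct
effects `e`, the transition from state `s` has exactly one result, namely
`e ∪ {l ∈ s | complement of l ∉ e}`. -/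
theorem frame_property (F : Type) [Fintype F]
    (e s : Set (Lit F))
    (hs : IsState (∅ : Set (Law F)) s)
    (he : consistentSet e) :
    ∀ s' : Set (Lit F),
      (IsState (∅ : Set (Law F)) s' ∧
        IsClosure (∅ : Set (Law F)) (e ∪ (s ∩ s')) s') ↔
      s' = e ∪ {l | l ∈ s ∧ complLit l ∉ e} := by
  intro s'
  obtain ⟨hsc, _, hsm⟩ := hs
  constructor
  · rintro ⟨⟨hc, _, hm⟩, hsub, _, _, hmin⟩
    have heq : s' = e ∪ (s ∩ s') := by
      apply Set.Subset.antisymm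
      · exact hmin _ subset_rfl (fun f hf => hc f ⟨hsub (hf.1), hsub (hf.2)⟩)
          (fun l hl => absurd hl (Set.notMem_empty l))
      · exact hsub
    ext l
    constructor
    · intro hl
      rcases (heq ▸ hl : l ∈ e ∪ (s ∩ s')) with h | ⟨hls, hls'⟩
      · exact Or.inl h
      · refine Or.inr ⟨hls, fun hce => ?_⟩
        exact compl_pair s' hc l hl (hsub (Or.inl hce))
    · rintro (h | ⟨hls, hce⟩)
      · exact hsub (Or.inl h)
      · obtain ⟨b, f⟩ := l
        rcases hm f with h' | h'
        all_goals cases b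
        · -- l = (false,f), (true,f) ∈ s'
          exfalso
          rcases (heq ▸ h' : (true, f) ∈ e ∪ (s ∩ s')) with h2 | h2
          · exact hce h2
          · exact hsc f ⟨h2.1, hls⟩
        · exact h'
        · exact h'
        · exfalso
          rcases (heq ▸ h' : (false, f) ∈ e ∪ (s ∩ s')) with h2 | h2
          · exact hce h2
          · exact hsc f ⟨hls, h2.1⟩
  · rintro rfl
    set T : Set (Lit F) := e ∪ {l | l ∈ s ∧ complLit l ∉ e} with hT
    have hTc : consistentSet T := by
      intro f ⟨h1, h2⟩
      rcases h1 with h1 | ⟨h1s, h1c⟩ <;> rcases h2 with h2 | ⟨h2s, h2c⟩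
      · exact he f ⟨h1, h2⟩
      · exact h2c h1
      · exact h1c h2
      · exact hsc f ⟨h1s, h2s⟩
    have hclosed : closedUnder (∅ : Set (Law F)) T :=
      fun l hl _ => absurd hl (Set.notMem_empty l)
    have hsubT : e ∪ (s ∩ T) ⊆ T := by
      rintro l (h | ⟨_, h⟩)
      · exact Or.inl h
      · exact h
    refine ⟨⟨hTc, hclosed, fun f => ?_⟩, hsubT, hTc, hclosed, fun S' hS' _ _ l hl => ?_⟩
    · rcases hsm f with h | h
      · by_cases hce : complLit (true, f) ∈ e
        · exact Or.inr (Or.inl (by simpa [complLit] using hce))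
        · exact Or.inl (Or.inr ⟨h, hce⟩)
      · by_cases hce : complLit (false, f) ∈ e
        · exact Or.inl (Or.inl (by simpa [complLit] using hce))
        · exact Or.inr (Or.inr ⟨h, hce⟩)
    · rcases hl with h | h
      · exact hS' (Or.inl h)
      · exact hS' (Or.inr ⟨h.1, Or.inr h⟩)
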